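/- For a finite oriented graph Γ with odd Laplacian Δ⁻, the (i,j) entry of (Δ⁻)^k equals the signed count Σ_γ sgn(γ) over all edge super-walks γ of length k from edge e_i to edge e_j. -/

import Mathlib

open Matrix

/-- The incidence matrix of an oriented graph given by source and target maps:
entry `(v, e)` is `1` if edge `e` ends at `v`, `-1` if `e` starts at `v`, `0` otherwise.
For an endpoint `v` of a loopless edge `e`, `incidence src tgt v e` is the sign of `v` in `e`. -/
def incidence {V E : Type*} [DecidableEq V] (src tgt : E → V) : Matrix V E ℤ :=
  fun v e => if tgt e = v then 1 else if src e = v then -1 else 0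

/-- An edge super-walk of length `k` from `e` to `f`: a sequence of `k + 1` edges (the
first component) together with, at each step, a chosen endpoint of the current edge (the
second component) which is also an endpoint of the next edge; a step either passes
through the chosen endpoint and returns to the same edge, or moves through the shared
chosen endpoint to a distinct edge. -/
abbrev EdgeSuperWalk {V E : Type*} (src tgt : E → V) (k : ℕ) (e f : E) : Type _ :=
  {p : (Fin (k + 1) → E) × (Fin k → V) //
    p.1 0 = e ∧ p.1 (Fin.last k) = f ∧
    ∀ t : Fin k,
      (src (p.1 t.castSucc) = p.2 t ∨ tgt (p.1 t.castSucc) = p.2 t) ∧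
      (src (p.1 t.succ) = p.2 t ∨ tgt (p.1 t.succ) = p.2 t)}

/-- The sign of an edge super-walk: a self-step contributes `+1`, and a step moving
through a shared vertex `v` from edge `a` to edge `b` contributes the product of the
sign of `v` in `a` and the sign of `v` in `b`. -/
def EdgeSuperWalk.sign {V E : Type*} [DecidableEq V] [DecidableEq E] {src tgt : E → V}
    {k : ℕ} {e f : E} (γ : EdgeSuperWalk src tgt k e f) : ℤ :=
  ∏ t : Fin k,
    if γ.1.1 t.succ = γ.1.1 t.castSucc then 1
    else incidence src tgt (γ.1.2 t) (γ.1.1 t.castSucc) *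
      incidence src tgt (γ.1.2 t) (γ.1.1 t.succ)

section Aux

variable {V E : Type*} [DecidableEq V] [DecidableEq E] (src tgt : E → V)

/-- `v` is an endpoint of both `g` and `f`. -/
def StepCond (g f : E) (v : V) : Prop :=
  (src g = v ∨ tgt g = v) ∧ (src f = v ∨ tgt f = v)

instance (g f : E) : DecidablePred (StepCond src tgt g f) :=
  fun _ => instDecidableAnd

lemma step_sum [Fintype V] (g f : E) :
    ((incidence src tgt)ᵀ * incidence src tgt) g f =
      ∑ v : {v : V // StepCond src tgt g f v},
        (if f = g then 1 else incidence src tgt v g * incidence src tgt v f) := by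
  rw [Matrix.mul_apply,
    ← Finset.sum_subtype (Finset.univ.filter (StepCond src tgt g f))
      (by simp) (fun v => if f = g then (1 : ℤ) else incidence src tgt v g * incidence src tgt v f),
    Finset.sum_filter]
  refine Finset.sum_congr rfl fun v _ => ?_
  rw [Matrix.transpose_apply]
  by_cases hfg : f = g
  · subst hfg
    by_cases h1 : tgt f = v <;> by_cases h2 : src f = v <;>
      simp [incidence, StepCond, h1, h2]
  · by_cases hc : StepCond src tgt g f v
    · simp [hc, hfg]
    · rw [if_neg hc]
      rw [StepCond, not_and_or] at hc
      rcases hc with hc | hc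
      · push_neg at hc
        simp [incidence, hc.1, hc.2]
      · push_neg at hc
        simp [incidence, hc.1, hc.2]

variable {k : ℕ} {e f : E}

/-- Extend an edge super-walk `e → g` of length `k` by one step to `f` through a vertex
`v` which is an endpoint of both `g` and `f`. -/
def snocWalk
    (x : Σ g : E, EdgeSuperWalk src tgt k e g × {v : V // StepCond src tgt g f v}) :
    EdgeSuperWalk src tgt (k + 1) e f :=
  ⟨(Fin.snoc x.2.1.1.1 f, Fin.snoc x.2.1.1.2 x.2.2.1), by
    obtain ⟨g, ⟨⟨p, q⟩, hp0, hpl, hstep⟩, v, hv⟩ := x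
    obtain ⟨hv1, hv2⟩ := hv
    dsimp only at hp0 hpl hstep ⊢
    refine ⟨?_, ?_, fun t => ?_⟩
    · rw [show (0 : Fin (k + 2)) = (0 : Fin (k + 1)).castSucc from rfl, Fin.snoc_castSucc]
      exact hp0
    · exact Fin.snoc_last _ _
    · induction t using Fin.lastCases with
      | last =>
        constructor
        · rw [Fin.snoc_castSucc, Fin.snoc_last, hpl]
          exact hv1
        · rw [Fin.succ_last, Fin.snoc_last, Fin.snoc_last]
          exact hv2
      | cast j =>
        have h := hstep j
        constructor
        · rw [Fin.snoc_castSucc, Fin.snoc_castSucc]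
          exact h.1
        · rw [Fin.succ_castSucc, Fin.snoc_castSucc, Fin.snoc_castSucc]
          exact h.2⟩

lemma snocWalk_injective : Function.Injective (snocWalk (k := k) (e := e) (f := f) src tgt) := by
  rintro ⟨g, ⟨⟨p, q⟩, hp0, hpl, hstep⟩, v, hv⟩ ⟨g', ⟨⟨p', q'⟩, hp0', hpl', hstep'⟩, v', hv'⟩ h
  have hfst : (Fin.snoc p f : Fin (k + 2) → E) = Fin.snoc p' f :=
    congrArg (fun z => (Subtype.val z).1) h
  have hsnd : (Fin.snoc q v : Fin (k + 1) → V) = Fin.snoc q' v' :=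
    congrArg (fun z => (Subtype.val z).2) h
  have hp : p = p' := by
    funext t
    have := congrFun hfst t.castSucc
    rwa [Fin.snoc_castSucc, Fin.snoc_castSucc] at this
  have hq : q = q' := by
    funext t
    have := congrFun hsnd t.castSucc
    rwa [Fin.snoc_castSucc, Fin.snoc_castSucc] at this
  have hvv : v = v' := by
    have := congrFun hsnd (Fin.last k)
    rwa [Fin.snoc_last, Fin.snoc_last] at this
  subst hp hq hvv
  have hg : g = g' := by rw [← hpl, ← hpl']
  subst hg
  rfl

lemma snocWalk_surjective :
    Function.Surjective (snocWalk (k := k) (e := e) (f := f) src tgt) := by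
  rintro ⟨⟨p, q⟩, hp0, hpl, hstep⟩
  dsimp only at hp0 hpl hstep
  refine ⟨⟨p (Fin.last k).castSucc,
    ⟨(fun t => p t.castSucc, fun t => q t.castSucc), ?_, rfl, fun t => ?_⟩,
    ⟨q (Fin.last k), ?_⟩⟩, ?_⟩
  · simpa using hp0
  · have h := hstep t.castSucc
    refine ⟨h.1, ?_⟩
    have := h.2
    rwa [Fin.succ_castSucc] at this
  · have h := hstep (Fin.last k)
    rw [Fin.succ_last, hpl] at h
    exact ⟨h.1, h.2⟩
  · refine Subtype.ext (Prod.ext ?_ ?_)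
    · show Fin.snoc (fun t : Fin (k + 1) => p t.castSucc) f = p
      rw [← hpl]
      exact Fin.snoc_init_self p
    · exact Fin.snoc_init_self q

lemma sign_snocWalk
    (x : Σ g : E, EdgeSuperWalk src tgt k e g × {v : V // StepCond src tgt g f v}) :
    (snocWalk src tgt x).sign =
      x.2.1.sign * (if f = x.1 then 1
        else incidence src tgt x.2.2.1 x.1 * incidence src tgt x.2.2.1 f) := by
  obtain ⟨g, ⟨⟨p, q⟩, hp0, hpl, hstep⟩, v, hv⟩ := x
  dsimp only at hpl
  simp only [EdgeSuperWalk.sign, snocWalk]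
  rw [Fin.prod_univ_castSucc]
  congr 1
  · refine Finset.prod_congr rfl fun t _ => ?_
    simp [Fin.succ_castSucc, -Fin.castSucc_succ]
  · simp [Fin.succ_last, hpl]

end Aux

/-- the (i,j) entry of (Δ⁻)^k is the signed count of edge super-walks of
length k from edge e_i to edge e_j. -/
theorem oddLaplacian_pow_eq_signed_edgeSuperWalk_count {V E : Type*} [Fintype V]
    [Fintype E] [DecidableEq V] [DecidableEq E] (src tgt : E → V)
    (hloop : ∀ e, src e ≠ tgt e)
    (hsimple : ∀ e f, ({src e, tgt e} : Finset V) = ({src f, tgt f} : Finset V) → e = f)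
    (k : ℕ) (e f : E) :
    ((((incidence src tgt)ᵀ * incidence src tgt)) ^ k) e f =
      ∑ γ : EdgeSuperWalk src tgt k e f, γ.sign := by
  induction k generalizing f with
  | zero =>
    rcases eq_or_ne e f with rfl | hef
    · haveI : Unique (EdgeSuperWalk src tgt 0 e e) :=
        { default := ⟨(fun _ => e, Fin.elim0), rfl, rfl, fun t => t.elim0⟩
          uniq := by
            rintro ⟨⟨p, q⟩, hp0, hpl, hstep⟩
            refine Subtype.ext (Prod.ext ?_ ?_)
            · funext t
              have ht : t = 0 := Fin.eq_zero t
              rw [ht]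
              exact hp0
            · funext t
              exact t.elim0 }
      rw [pow_zero, Matrix.one_apply_eq, Fintype.sum_unique]
      simp [EdgeSuperWalk.sign]
    · haveI : IsEmpty (EdgeSuperWalk src tgt 0 e f) := by
        constructor
        rintro ⟨⟨p, q⟩, hp0, hpl, _⟩
        exact hef (hp0 ▸ hpl)
      rw [pow_zero, Matrix.one_apply_ne hef]
      simp
  | succ k ih =>
    rw [pow_succ, Matrix.mul_apply]
    have key : ∀ x : Σ g : E, EdgeSuperWalk src tgt k e g × {v : V // StepCond src tgt g f v},
        x.2.1.sign * (if f = x.1 then 1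
          else incidence src tgt x.2.2.1 x.1 * incidence src tgt x.2.2.1 f) =
        (snocWalk src tgt x).sign := fun x => (sign_snocWalk src tgt x).symm
    calc ∑ g : E, (((incidence src tgt)ᵀ * incidence src tgt) ^ k) e g *
            ((incidence src tgt)ᵀ * incidence src tgt) g f
        = ∑ g : E, ∑ w : EdgeSuperWalk src tgt k e g,
            ∑ v : {v : V // StepCond src tgt g f v},
              w.sign * (if f = g then 1
                else incidence src tgt v g * incidence src tgt v f) := by
          refine Finset.sum_congr rfl fun g _ => ?_
          rw [ih g, step_sum, Finset.sum_mul_sum]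
      _ = ∑ x : Σ g : E, EdgeSuperWalk src tgt k e g × {v : V // StepCond src tgt g f v},
            x.2.1.sign * (if f = x.1 then 1
              else incidence src tgt x.2.2.1 x.1 * incidence src tgt x.2.2.1 f) := by
          rw [← Finset.univ_sigma_univ, Finset.sum_sigma]
          refine Finset.sum_congr rfl fun g _ => ?_
          rw [Fintype.sum_prod_type]
      _ = ∑ γ : EdgeSuperWalk src tgt (k + 1) e f, γ.sign :=
          Fintype.sum_bijective _ ⟨snocWalk_injective src tgt, snocWalk_surjective src tgt⟩
            _ _ key
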